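/- Suppose Assumptions 1–2 hold: each client loss L_i is μ-strongly convex and L-smooth (equivalently, its gradient g_i satisfies ⟨w−w', g_i(w)−g_i(w')⟩ ≥ μ‖w−w'‖² and ≥ (1/L)‖g_i(w)−g_i(w')‖²), and in every round the per-client model-update estimation error is at most M. Let ŵ_t be FedRecover's recovered global model (using FedAvg aggregation, τ = ∞) and w_t the train-from-scratch model, both updated with learning rate η ≤ min(1/μ, 1/L). Then for all t ≥ 0: ‖ŵ_t − w_t‖ ≤ (sqrt(1−ημ))^t ‖ŵ_0 − w_0‖ + ηM · (1 − (sqrt(1−ημ))^t)/(1 − sqrt(1−ημ)). -/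

import Mathlib

open scoped RealInnerProductSpace

/-- Theorem 1 of FedRecover: in every round, FedRecover updates the recovered
global model with FedAvg-aggregated (possibly estimated) model updates whose
per-client estimation error is at most `M`, while train-from-scratch uses exact
updates. The model difference is bounded in every round. -/
theorem stmt_9 (d k : ℕ) (g : Fin k → EuclideanSpace ℝ (Fin d) → EuclideanSpace ℝ (Fin d))
    (lam : Fin k → ℝ) (μ L η M : ℝ)
    (wh w : ℕ → EuclideanSpace ℝ (Fin d))
    (hμ : 0 < μ) (hL : 0 < L)
    (hmono : ∀ i x y, ⟪x - y, g i x - g i y⟫ ≥ μ * ‖x - y‖ ^ 2)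
    (hcoco : ∀ i x y, ⟪x - y, g i x - g i y⟫ ≥ (1 / L) * ‖g i x - g i y‖ ^ 2)
    (hlam : ∀ i, 0 ≤ lam i) (hsum : ∑ i, lam i = 1)
    (hη0 : 0 < η) (hη : η ≤ min (1 / μ) (1 / L)) (hημ : η * μ < 1)
    -- FedRecover's update: exact rounds correspond to zero estimation error,
    -- estimated rounds have per-client error at most M
    (hrec : ∀ t, ∃ e : Fin k → EuclideanSpace ℝ (Fin d),
      (∀ i, ‖e i‖ ≤ M) ∧ wh (t + 1) = wh t - η • ∑ i, lam i • (g i (wh t) + e i))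
    -- train-from-scratch update
    (hscr : ∀ t, w (t + 1) = w t - η • ∑ i, lam i • g i (w t)) :
    ∀ t, ‖wh t - w t‖ ≤ (Real.sqrt (1 - η * μ)) ^ t * ‖wh 0 - w 0‖
      + η * M * (1 - (Real.sqrt (1 - η * μ)) ^ t) / (1 - Real.sqrt (1 - η * μ)) := by
  set q := Real.sqrt (1 - η * μ) with hqdef
  have hημpos : 0 < η * μ := mul_pos hη0 hμ
  have h1 : 0 ≤ 1 - η * μ := by linarith
  have hq0 : 0 ≤ q := Real.sqrt_nonneg _
  have hq2 : q ^ 2 = 1 - η * μ := Real.sq_sqrt h1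
  have hq1 : q < 1 := by
    nlinarith
  -- k is nonempty and M ≥ 0
  have hk : Nonempty (Fin k) := by
    by_contra h
    rw [not_nonempty_iff] at h
    simp [Finset.sum_of_isEmpty] at hsum
  have hMnn : 0 ≤ M := by
    obtain ⟨e, he, _⟩ := hrec 0
    exact le_trans (norm_nonneg _) (he (Classical.arbitrary _))
  have hηL : η * L ≤ 1 := by
    have h2 : η ≤ 1 / L := le_trans hη (min_le_right _ _)
    rw [le_div_iff₀ hL] at h2
    exact h2
  -- per-client contraction
  have key : ∀ i (x y : EuclideanSpace ℝ (Fin d)),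
      ‖(x - η • g i x) - (y - η • g i y)‖ ≤ q * ‖x - y‖ := by
    intro i x y
    have hip := hmono i x y
    have hcc := hcoco i x y
    set a := x - y with ha
    set b := g i x - g i y with hb
    have hab : (x - η • g i x) - (y - η • g i y) = a - η • b := by
      rw [ha, hb, smul_sub]; abel
    have hipnn : 0 ≤ ⟪a, b⟫ := le_trans (by positivity) hip
    have expand : ‖a - η • b‖ ^ 2 = ‖a‖ ^ 2 - 2 * (η * ⟪a, b⟫) + η ^ 2 * ‖b‖ ^ 2 := by
      rw [norm_sub_sq_real, real_inner_smul_right, norm_smul, Real.norm_eq_abs, mul_pow,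
        sq_abs]
    have hbL : ‖b‖ ^ 2 ≤ L * ⟪a, b⟫ := by
      have h2 : (1 / L) * ‖b‖ ^ 2 ≤ ⟪a, b⟫ := hcc
      calc ‖b‖ ^ 2 = L * ((1 / L) * ‖b‖ ^ 2) := by field_simp
        _ ≤ L * ⟪a, b⟫ := by exact mul_le_mul_of_nonneg_left h2 hL.le
    have h2 : η ^ 2 * ‖b‖ ^ 2 ≤ η ^ 2 * (L * ⟪a, b⟫) :=
      mul_le_mul_of_nonneg_left hbL (sq_nonneg η)
    have h3 : η ^ 2 * (L * ⟪a, b⟫) ≤ η * ⟪a, b⟫ := by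
      nlinarith [mul_nonneg (mul_nonneg hη0.le hipnn) (sub_nonneg.2 hηL)]
    have h4 : η * (μ * ‖a‖ ^ 2) ≤ η * ⟪a, b⟫ := mul_le_mul_of_nonneg_left hip hη0.le
    have hsq : ‖a - η • b‖ ^ 2 ≤ (q * ‖a‖) ^ 2 := by
      rw [expand, mul_pow, hq2]
      nlinarith
    rw [hab]
    have := Real.sqrt_le_sqrt hsq
    rwa [Real.sqrt_sq (norm_nonneg _), Real.sqrt_sq (mul_nonneg hq0 (norm_nonneg _))] at this
  -- one-round recursion
  have step : ∀ t, ‖wh (t + 1) - w (t + 1)‖ ≤ q * ‖wh t - w t‖ + η * M := by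
    intro t
    obtain ⟨e, he, hwh⟩ := hrec t
    have hid : wh (t + 1) - w (t + 1) =
        (∑ i, lam i • ((wh t - η • g i (wh t)) - (w t - η • g i (w t))))
          - ∑ i, lam i • (η • e i) := by
      rw [hwh, hscr t]
      rw [← Finset.sum_sub_distrib]
      have : ∀ i : Fin k, lam i • ((wh t - η • g i (wh t)) - (w t - η • g i (w t)))
          - lam i • (η • e i)
          = lam i • (wh t - w t) - lam i • (η • (g i (wh t) + e i)) + lam i • (η • g i (w t)) := by
        intro i
        simp only [smul_sub, smul_add]
        abel
      rw [Finset.sum_congr rfl fun i _ => this i]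
      rw [Finset.sum_add_distrib, Finset.sum_sub_distrib, ← Finset.sum_smul, hsum, one_smul]
      simp only [smul_comm (lam _) η, ← Finset.smul_sum, smul_sub]
      abel
    rw [hid]
    have hA : ‖∑ i, lam i • ((wh t - η • g i (wh t)) - (w t - η • g i (w t)))‖
        ≤ q * ‖wh t - w t‖ := by
      calc ‖∑ i, lam i • ((wh t - η • g i (wh t)) - (w t - η • g i (w t)))‖
          ≤ ∑ i, ‖lam i • ((wh t - η • g i (wh t)) - (w t - η • g i (w t)))‖ :=
            norm_sum_le _ _
        _ = ∑ i, lam i * ‖(wh t - η • g i (wh t)) - (w t - η • g i (w t))‖ := by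
            simp [norm_smul, abs_of_nonneg (hlam _)]
        _ ≤ ∑ i, lam i * (q * ‖wh t - w t‖) :=
            Finset.sum_le_sum fun i _ => mul_le_mul_of_nonneg_left (key i _ _) (hlam i)
        _ = q * ‖wh t - w t‖ := by rw [← Finset.sum_mul, hsum, one_mul]
    have hB : ‖∑ i, lam i • (η • e i)‖ ≤ η * M := by
      calc ‖∑ i, lam i • (η • e i)‖ ≤ ∑ i, ‖lam i • (η • e i)‖ := norm_sum_le _ _
        _ = ∑ i, lam i * (η * ‖e i‖) := by
            simp [norm_smul, abs_of_nonneg (hlam _), abs_of_nonneg hη0.le]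
        _ ≤ ∑ i, lam i * (η * M) :=
            Finset.sum_le_sum fun i _ => mul_le_mul_of_nonneg_left
              (mul_le_mul_of_nonneg_left (he i) hη0.le) (hlam i)
        _ = η * M := by rw [← Finset.sum_mul, hsum, one_mul]
    calc ‖(∑ i, lam i • ((wh t - η • g i (wh t)) - (w t - η • g i (w t))))
          - ∑ i, lam i • (η • e i)‖
        ≤ ‖∑ i, lam i • ((wh t - η • g i (wh t)) - (w t - η • g i (w t)))‖
          + ‖∑ i, lam i • (η • e i)‖ := norm_sub_le _ _
      _ ≤ q * ‖wh t - w t‖ + η * M := add_le_add hA hB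
  -- induction
  intro t
  induction t with
  | zero => simp
  | succ n ih =>
    have hden : (0:ℝ) < 1 - q := by linarith
    have e1 : q * (q ^ n * ‖wh 0 - w 0‖ + η * M * (1 - q ^ n) / (1 - q)) + η * M
        = q ^ (n + 1) * ‖wh 0 - w 0‖ + η * M * (1 - q ^ (n + 1)) / (1 - q) := by
      field_simp
      ring
    calc ‖wh (n + 1) - w (n + 1)‖ ≤ q * ‖wh n - w n‖ + η * M := step n
      _ ≤ q * (q ^ n * ‖wh 0 - w 0‖ + η * M * (1 - q ^ n) / (1 - q)) + η * M :=
          add_le_add_left (mul_le_mul_of_nonneg_left ih hq0) _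
      _ = _ := e1
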